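/- Let n ≥ 0 and let G be an Abelian group of isometries of the Euclidean space ℝⁿ (surjective self-isometries of ℝⁿ with the Euclidean distance). If G is a GAF then G is a GAG. -/

import Mathlib

open EuclideanGeometry

/-- The common fixed point set of a family of affine isometry equivalences (over an index
set `s`) of a Euclidean space, as an affine subspace. -/
noncomputable def commonFixed {n : ℕ} {ι : Type*}
    (F : ι → (EuclideanSpace ℝ (Fin n) ≃ᵃⁱ[ℝ] EuclideanSpace ℝ (Fin n)))
    (s : Set ι) : AffineSubspace ℝ (EuclideanSpace ℝ (Fin n)) where
  carrier := {x | ∀ i ∈ s, F i x = x}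
  smul_vsub_vadd_mem' c {x y z} hx hy hz := by
    intro i hi
    rw [AffineIsometryEquiv.map_vadd, LinearIsometryEquiv.map_smul,
      AffineIsometryEquiv.map_vsub, hx i hi, hy i hi, hz i hi]

lemma mem_commonFixed {n : ℕ} {ι : Type*}
    {F : ι → (EuclideanSpace ℝ (Fin n) ≃ᵃⁱ[ℝ] EuclideanSpace ℝ (Fin n))} {s : Set ι}
    {x : EuclideanSpace ℝ (Fin n)} : x ∈ commonFixed F s ↔ ∀ i ∈ s, F i x = x := Iff.rfl

/-- An Abelian group of isometries of the Euclidean space `ℝⁿ` which is a GAF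
(every element has a fixed point) is a GAG (has a common fixed point). -/
theorem abelian_isometry_group_euclidean_gaf_gag
    (n : ℕ)
    (G : Subgroup (Equiv.Perm (EuclideanSpace ℝ (Fin n))))
    (hiso : ∀ g ∈ G, ∀ x y : EuclideanSpace ℝ (Fin n), dist (g x) (g y) = dist x y)
    (hab : ∀ g ∈ G, ∀ h ∈ G, g * h = h * g)
    (hGAF : ∀ g ∈ G, ∃ x : EuclideanSpace ℝ (Fin n), g x = x) :
    ∃ x : EuclideanSpace ℝ (Fin n), ∀ g ∈ G, g x = x := by
  classical
  -- choose an affine isometry equivalence agreeing with each element of G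
  have hfun : ∀ i : G, ∃ f : EuclideanSpace ℝ (Fin n) ≃ᵃⁱ[ℝ] EuclideanSpace ℝ (Fin n),
      ∀ x, f x = i.1 x := by
    intro i
    have hI : Isometry (i.1 : EuclideanSpace ℝ (Fin n) → EuclideanSpace ℝ (Fin n)) :=
      Isometry.of_dist_eq (hiso i.1 i.2)
    refine ⟨(IsometryEquiv.mk i.1 hI).toRealAffineIsometryEquiv, fun x => ?_⟩
    rw [IsometryEquiv.coeFn_toRealAffineIsometryEquiv]
    rfl
  choose f hf using hfun
  -- commutation
  have hcomm : ∀ i j : G, ∀ x : EuclideanSpace ℝ (Fin n), i.1 (j.1 x) = j.1 (i.1 x) := by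
    intro i j x
    have h2 : (i.1 * j.1) x = (j.1 * i.1) x := by rw [hab i.1 i.2 j.1 j.2]
    simpa [Equiv.Perm.mul_apply] using h2
  set S : Finset G → AffineSubspace ℝ (EuclideanSpace ℝ (Fin n)) :=
    fun T => commonFixed f (↑T : Set G) with hS
  have mem_S : ∀ (T : Finset G) (x : EuclideanSpace ℝ (Fin n)),
      x ∈ S T ↔ ∀ i ∈ T, i.1 x = x := by
    intro T x
    rw [hS]
    constructor
    · intro h i hi; rw [← hf i x]; exact h i hi
    · intro h i hi; rw [hf i x]; exact h i hi
  -- every element of G maps S T into itself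
  have hpres : ∀ (i : G) (T : Finset G) (x : EuclideanSpace ℝ (Fin n)),
      x ∈ S T → i.1 x ∈ S T := by
    intro i T x hx
    rw [mem_S] at hx ⊢
    intro j hj
    rw [hcomm j i x, hx j hj]
  -- finite intersections are nonempty
  have hSne : ∀ T : Finset G, ((S T : Set (EuclideanSpace ℝ (Fin n)))).Nonempty := by
    intro T
    induction T using Finset.induction_on with
    | empty => exact ⟨0, (mem_S ∅ 0).2 (by simp)⟩
    | @insert i T hi ih =>
      obtain ⟨p, hp⟩ := ih
      haveI : Nonempty (S T) := ⟨⟨p, hp⟩⟩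
      obtain ⟨p₀, hp₀⟩ := hGAF i.1 i.2
      set q : EuclideanSpace ℝ (Fin n) := ↑(orthogonalProjection (S T) p₀) with hq
      have hqF : q ∈ S T := orthogonalProjection_mem p₀
      have hiq : i.1 q = q := by
        have hsingle := inter_eq_singleton_orthogonalProjection (s := S T) p₀
        have hmem : i.1 q ∈ ((S T : Set (EuclideanSpace ℝ (Fin n))) ∩
            AffineSubspace.mk' p₀ (S T).directionᗮ) := by
          constructor
          · exact hpres i T q hqF
          · rw [SetLike.mem_coe, AffineSubspace.mem_mk',
              Submodule.mem_orthogonal']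
            intro v hv
            set L := (f i).linearIsometryEquiv with hL
            have h1 : i.1 q -ᵥ p₀ = L (q -ᵥ p₀) := by
              rw [hL, AffineIsometryEquiv.map_vsub, hf i q, hf i p₀, hp₀]
            rw [h1]
            have hLsymm : L.symm v ∈ (S T).direction := by
              obtain ⟨a, ha, b, hb, rfl⟩ :=
                (AffineSubspace.mem_direction_iff_eq_vsub ⟨p, hp⟩ v).1 hv
              have hkey : L ((i⁻¹ : G).1 a -ᵥ (i⁻¹ : G).1 b) = a -ᵥ b := by
                rw [hL, AffineIsometryEquiv.map_vsub, hf i, hf i]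
                simp
              have h3 : L.symm (a -ᵥ b) = (i⁻¹ : G).1 a -ᵥ (i⁻¹ : G).1 b := by
                rw [← hkey, LinearIsometryEquiv.symm_apply_apply]
              rw [h3]
              exact AffineSubspace.vsub_mem_direction
                (hpres i⁻¹ T a ha) (hpres i⁻¹ T b hb)
            have h2 : (inner ℝ (L (q -ᵥ p₀)) v : ℝ) = inner ℝ (q -ᵥ p₀) (L.symm v) := by
              conv_lhs => rw [← LinearIsometryEquiv.apply_symm_apply L v]
              rw [LinearIsometryEquiv.inner_map_map]
            rw [h2]
            have horth : q -ᵥ p₀ ∈ (S T).directionᗮ := by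
              have h4 := vsub_orthogonalProjection_mem_direction_orthogonal (S T) p₀
              have h3 : q -ᵥ p₀ = -(p₀ -ᵥ q) := by rw [neg_vsub_eq_vsub_rev]
              rw [h3]
              exact neg_mem h4
            exact ((Submodule.mem_orthogonal' _ _).1 horth) _ hLsymm
        rw [hsingle] at hmem
        exact hmem
      refine ⟨q, (mem_S _ q).2 ?_⟩
      intro j hj
      rcases Finset.mem_insert.1 hj with h | h
      · rw [h]; exact hiq
      · exact (mem_S T q).1 hqF j h
  -- pick a finite intersection of minimal dimension
  set D : Set ℕ := {m | ∃ T : Finset G, Module.finrank ℝ (S T).direction = m} with hD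
  have hDne : D.Nonempty := ⟨_, ⟨∅, rfl⟩⟩
  obtain ⟨T₀, hT₀⟩ : ∃ T₀ : Finset G, Module.finrank ℝ (S T₀).direction = sInf D :=
    Nat.sInf_mem hDne
  have hmin : ∀ T : Finset G, sInf D ≤ Module.finrank ℝ (S T).direction :=
    fun T => Nat.sInf_le ⟨T, rfl⟩
  -- the minimal intersection is fixed by every element of G
  have hfix : ∀ i : G, ∀ y ∈ S T₀, i.1 y = y := by
    intro i
    have hle : S (insert i T₀) ≤ S T₀ := by
      intro x hx
      rw [mem_S] at hx ⊢
      exact fun j hj => hx j (Finset.mem_insert_of_mem hj)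
    have hdirle : (S (insert i T₀)).direction ≤ (S T₀).direction :=
      AffineSubspace.direction_le hle
    have hfr : Module.finrank ℝ (S (insert i T₀)).direction
        = Module.finrank ℝ (S T₀).direction := by
      refine le_antisymm (Submodule.finrank_mono hdirle) ?_
      rw [hT₀]; exact hmin _
    have hdir : (S (insert i T₀)).direction = (S T₀).direction :=
      Submodule.eq_of_le_of_finrank_eq hdirle hfr
    obtain ⟨x, hx⟩ := hSne (insert i T₀)
    have hST : S (insert i T₀) = S T₀ :=
      AffineSubspace.ext_of_direction_eq hdir ⟨x, hx, hle hx⟩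
    intro y hy
    rw [← hST] at hy
    exact (mem_S _ y).1 hy i (Finset.mem_insert_self i T₀)
  obtain ⟨x, hx⟩ := hSne T₀
  exact ⟨x, fun g hg => hfix ⟨g, hg⟩ x hx⟩
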